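/- arXiv:1905.10551 — 4 statements merged into one kernel-verified Lean document; each statement's English description precedes it below -/
import Mathlib

section
/- Define the log-harmonic right half-plane mapping f_{1/2} by f_{1/2}(z) = (z/(1 − z))·exp(Re(2z/(1 − z))), which is defined for all z ≠ 1. Then for every θ ∈ (0, 2π), Re f_{1/2}(e^{iθ}) = −1/(2e) and Im f_{1/2}(e^{iθ}) = (1/(2e))·cot(θ/2). -/
open Complex Metric Set

theorem stmt_14 (f : ℂ → ℂ)
    (hf : ∀ z : ℂ, z ≠ 1 →
        f z = z / (1 - z) * ((Real.exp ((2 * z / (1 - z)).re) : ℝ) : ℂ)) :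
    ∀ θ ∈ Set.Ioo (0 : ℝ) (2 * Real.pi),
      (f (Complex.exp (θ * Complex.I))).re = -(1 / (2 * Real.exp 1)) ∧
        (f (Complex.exp (θ * Complex.I))).im =
          (1 / (2 * Real.exp 1)) * Real.cot (θ / 2) := by
  intro θ hθ
  obtain ⟨hθ0, hθ2⟩ := hθ
  set z := Complex.exp (θ * Complex.I) with hzdef
  have hzre : z.re = Real.cos θ := Complex.exp_ofReal_mul_I_re θ
  have hzim : z.im = Real.sin θ := Complex.exp_ofReal_mul_I_im θ
  have hcos : Real.cos θ ≠ 1 := by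
    intro h
    rw [Real.cos_eq_one_iff_of_lt_of_lt (by linarith [Real.pi_pos]) hθ2] at h
    linarith
  have hz1 : z ≠ 1 := by
    intro h
    apply hcos
    rw [← hzre, h, Complex.one_re]
  have hs : 0 < Real.sin (θ / 2) :=
    Real.sin_pos_of_pos_of_lt_pi (by linarith) (by linarith)
  have hpyth : Real.sin (θ / 2) ^ 2 + Real.cos (θ / 2) ^ 2 = 1 :=
    Real.sin_sq_add_cos_sq (θ / 2)
  have hcosθ : Real.cos θ = 1 - 2 * Real.sin (θ / 2) ^ 2 := by
    have h := Real.cos_two_mul (θ / 2)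
    rw [show 2 * (θ / 2) = θ by ring] at h
    nlinarith
  have hsinθ : Real.sin θ = 2 * Real.sin (θ / 2) * Real.cos (θ / 2) := by
    have h := Real.sin_two_mul (θ / 2)
    rwa [show 2 * (θ / 2) = θ by ring] at h
  set s := Real.sin (θ / 2) with hsdef
  set c := Real.cos (θ / 2) with hcdef
  have hcot : Real.cot (θ / 2) = c / s := Real.cot_eq_cos_div_sin (θ / 2)
  clear_value s c
  have hns : Complex.normSq (1 - z) = 4 * s ^ 2 := by
    rw [Complex.normSq_apply, Complex.sub_re, Complex.sub_im, Complex.one_re,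
      Complex.one_im, hzre, hzim]
    nlinarith [Real.sin_sq_add_cos_sq θ]
  have hwre : (z / (1 - z)).re = -(1 / 2) := by
    rw [Complex.div_re, hns, Complex.sub_re, Complex.sub_im, Complex.one_re,
      Complex.one_im, hzre, hzim]
    field_simp
    nlinarith [Real.sin_sq_add_cos_sq θ]
  have hwim : (z / (1 - z)).im = c / (2 * s) := by
    rw [Complex.div_im, hns, Complex.sub_re, Complex.sub_im, Complex.one_re,
      Complex.one_im, hzre, hzim]
    rw [div_sub_div_same, div_eq_div_iff (by positivity) (by positivity)]
    nlinarith [Real.sin_sq_add_cos_sq θ]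
  have h2re : (2 * z / (1 - z)).re = -1 := by
    rw [mul_div_assoc, Complex.mul_re]
    simp only [Complex.re_ofNat, Complex.im_ofNat, hwre]
    ring
  rw [hf z hz1, h2re]
  have hmre : ∀ (w : ℂ) (r : ℝ), (w * (r : ℂ)).re = w.re * r := by
    intro w r
    rw [Complex.mul_re, Complex.ofReal_re, Complex.ofReal_im, mul_zero, sub_zero]
  have hmim : ∀ (w : ℂ) (r : ℝ), (w * (r : ℂ)).im = w.im * r := by
    intro w r
    rw [Complex.mul_im, Complex.ofReal_re, Complex.ofReal_im, mul_zero, zero_add]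
  constructor
  · rw [hmre, hwre, Real.exp_neg]
    have he : Real.exp 1 ≠ 0 := Real.exp_ne_zero 1
    field_simp
  · rw [hmim, hwim, Real.exp_neg, hcot]
    have he : Real.exp 1 ≠ 0 := Real.exp_ne_zero 1
    have hs0 : s ≠ 0 := ne_of_gt hs
    field_simp
end

section
/- Define f_{1/2} on the open unit disk 𝔻 by f_{1/2}(z) = (z/(1 − z))·exp(Re(2z/(1 − z))). Then f_{1/2} is injective on 𝔻 and the image f_{1/2}(𝔻) equals the half-plane {w ∈ ℂ : Re w > −1/(2e)}. -/
open Complex Metric Set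

noncomputable def psi : ℝ → ℝ := fun u => u * Real.exp (2 * u)

lemma psi_strictMono : StrictMonoOn psi (Set.Ici (-(1/2) : ℝ)) := by
  apply strictMonoOn_of_deriv_pos (convex_Ici _)
  · exact (continuous_id.mul (Real.continuous_exp.comp (continuous_const.mul continuous_id))).continuousOn
  · intro u hu
    rw [interior_Ici, Set.mem_Ioi] at hu
    have h1 : HasDerivAt (fun u : ℝ => Real.exp (2*u)) (Real.exp (2*u) * 2) u := by
      simpa [Function.comp_def] using (Real.hasDerivAt_exp (2*u)).comp u ((hasDerivAt_id u).const_mul 2)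
    have h2 : HasDerivAt psi (1 * Real.exp (2*u) + u * (Real.exp (2*u) * 2)) u :=
      (hasDerivAt_id u).mul h1
    rw [h2.deriv]
    nlinarith [Real.exp_pos (2*u)]

lemma psi_base : psi (-(1/2)) = -(1 / (2 * Real.exp 1)) := by
  unfold psi
  rw [show (2 : ℝ) * -(1/2) = -1 by ring, Real.exp_neg]
  field_simp

lemma psi_surj {a : ℝ} (ha : -(1 / (2 * Real.exp 1)) < a) :
    ∃ u : ℝ, -(1/2) < u ∧ psi u = a := by
  set M := max 1 a with hM
  have hM1 : (1:ℝ) ≤ M := le_max_left _ _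
  have hMa : a ≤ M := le_max_right _ _
  have hMpos : (0:ℝ) < M := lt_of_lt_of_le one_pos hM1
  have hexp : 1 < Real.exp (2 * M) := by
    rw [show (1:ℝ) = Real.exp 0 by simp]
    exact Real.exp_lt_exp.2 (by linarith)
  have hMgt : a < psi M := by
    unfold psi
    nlinarith
  have hle : -(1/2 : ℝ) ≤ M := by linarith
  have hcont : ContinuousOn psi (Set.Icc (-(1/2)) M) :=
    (continuous_id.mul (Real.continuous_exp.comp (continuous_const.mul continuous_id))).continuousOn
  have hmem : a ∈ Set.Icc (psi (-(1/2))) (psi M) := by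
    rw [psi_base]; exact ⟨le_of_lt ha, le_of_lt hMgt⟩
  obtain ⟨u, hu, hua⟩ := intermediate_value_Icc hle hcont hmem
  refine ⟨u, ?_, hua⟩
  rcases lt_or_eq_of_le hu.1 with h | h
  · exact h
  · exfalso; rw [← h, psi_base] at hua; linarith

-- half-plane facts
lemma ne_one_of_ball {z : ℂ} (hz : ‖z‖ < 1) : z ≠ 1 := by
  intro h; rw [h] at hz; simp at hz

lemma sub_ne {z : ℂ} (hz : ‖z‖ < 1) : (1 : ℂ) - z ≠ 0 := by
  intro h
  have : z = 1 := by linear_combination -h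
  exact ne_one_of_ball hz this

lemma re_w_gt {z : ℂ} (hz : ‖z‖ < 1) : -(1/2 : ℝ) < (z / (1 - z)).re := by
  have hz1 : (1 : ℂ) - z ≠ 0 := sub_ne hz
  have hD : 0 < Complex.normSq (1 - z) := Complex.normSq_pos.2 hz1
  have hlt : z.re^2 + z.im^2 < 1 := by
    have h1 : ‖z‖ ^ 2 = z.re^2 + z.im^2 := by
      rw [Complex.sq_norm, Complex.normSq_apply]; ring
    nlinarith [norm_nonneg z]
  have hre : (z / (1 - z)).re = (z.re * (1 - z.re) - z.im * z.im) / Complex.normSq (1 - z) := by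
    rw [Complex.div_re]
    simp only [Complex.sub_re, Complex.sub_im, Complex.one_re, Complex.one_im]
    ring
  rw [hre, lt_div_iff₀ hD, Complex.normSq_apply]
  simp only [Complex.sub_re, Complex.sub_im, Complex.one_re, Complex.one_im]
  nlinarith

lemma one_add_ne {W : ℂ} (hW : -(1/2 : ℝ) < W.re) : (1 : ℂ) + W ≠ 0 := by
  intro h
  have : (1 + W).re = 0 := by rw [h]; simp
  simp only [Complex.add_re, Complex.one_re] at this
  linarith

lemma inv_mobius_mem {W : ℂ} (hW : -(1/2 : ℝ) < W.re) :
    ‖W / (1 + W)‖ < 1 := by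
  have h1 : (1 : ℂ) + W ≠ 0 := one_add_ne hW
  have hpos : 0 < ‖1 + W‖ := norm_pos_iff.mpr h1
  rw [norm_div, div_lt_one hpos]
  have : Complex.normSq W < Complex.normSq (1 + W) := by
    rw [Complex.normSq_apply, Complex.normSq_apply]
    simp only [Complex.add_re, Complex.add_im, Complex.one_re, Complex.one_im]
    nlinarith
  nlinarith [norm_nonneg W, norm_nonneg (1 + W),
    Complex.sq_norm W, Complex.sq_norm (1 + W)]

lemma inv_mobius_eq {W : ℂ} (hW : -(1/2 : ℝ) < W.re) :
    (W / (1 + W)) / (1 - W / (1 + W)) = W := by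
  have h1 : (1 : ℂ) + W ≠ 0 := one_add_ne hW
  field_simp
  ring

theorem stmt_15 (f : ℂ → ℂ)
    (hf : ∀ z : ℂ, z ≠ 1 →
        f z = z / (1 - z) * ((Real.exp ((2 * z / (1 - z)).re) : ℝ) : ℂ)) :
    Set.InjOn f (ball (0 : ℂ) 1) ∧
      f '' ball (0 : ℂ) 1 = {w : ℂ | -(1 / (2 * Real.exp 1)) < w.re} := by
  -- rewrite f on the ball
  have habs : ∀ z ∈ ball (0 : ℂ) 1, ‖z‖ < 1 := by
    intro z hz; simpa [Complex.dist_eq] using mem_ball.1 hz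
  have hval : ∀ z : ℂ, ‖z‖ < 1 →
      f z = (z / (1 - z)) * ((Real.exp (2 * (z / (1 - z)).re) : ℝ) : ℂ) := by
    intro z hz
    rw [hf z (ne_one_of_ball hz)]
    congr 2
    rw [mul_div_assoc]
    simp [Complex.mul_re]
  constructor
  · intro z1 hz1 z2 hz2 hfeq
    have h1 := habs z1 hz1
    have h2 := habs z2 hz2
    set w1 := z1 / (1 - z1) with hw1
    set w2 := z2 / (1 - z2) with hw2
    have hr1 : -(1/2 : ℝ) < w1.re := re_w_gt h1
    have hr2 : -(1/2 : ℝ) < w2.re := re_w_gt h2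
    rw [hval z1 h1, hval z2 h2] at hfeq
    have hre : w1.re * Real.exp (2 * w1.re) = w2.re * Real.exp (2 * w2.re) := by
      have := congrArg Complex.re hfeq
      simpa only [Complex.mul_re, Complex.ofReal_re, Complex.ofReal_im, mul_zero, sub_zero] using this
    have hueq : w1.re = w2.re :=
      psi_strictMono.injOn (le_of_lt hr1) (le_of_lt hr2) hre
    have hEeq : Real.exp (2 * w1.re) = Real.exp (2 * w2.re) := by rw [hueq]
    have hweq : w1 = w2 := by
      have him : w1.im * Real.exp (2 * w1.re) = w2.im * Real.exp (2 * w2.re) := by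
        have := congrArg Complex.im hfeq
        simpa only [Complex.mul_im, Complex.ofReal_re, Complex.ofReal_im, mul_zero, zero_add] using this
      rw [hEeq] at him
      have hEpos : 0 < Real.exp (2 * w2.re) := Real.exp_pos _
      apply Complex.ext hueq
      exact mul_right_cancel₀ (ne_of_gt hEpos) him
    -- deduce z1 = z2
    have hs1 : (1 : ℂ) - z1 ≠ 0 := sub_ne h1
    have hs2 : (1 : ℂ) - z2 ≠ 0 := sub_ne h2
    rw [hw1, hw2, div_eq_div_iff hs1 hs2] at hweq
    have : z1 * (1 - z2) - z2 * (1 - z1) = z1 - z2 := by ring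
    have hz : z1 - z2 = 0 := by linear_combination hweq
    linear_combination hz
  · ext w
    simp only [Set.mem_image, Set.mem_setOf_eq]
    constructor
    · rintro ⟨z, hz, rfl⟩
      have h1 := habs z hz
      rw [hval z h1]
      set u := (z / (1 - z)).re with hu
      have hr : -(1/2 : ℝ) < u := re_w_gt h1
      have hre : ((z / (1 - z)) * ((Real.exp (2 * u) : ℝ) : ℂ)).re
          = u * Real.exp (2 * u) := by
        simp only [Complex.mul_re, Complex.ofReal_re, Complex.ofReal_im, mul_zero, sub_zero]
        rfl
      rw [hre]
      calc -(1 / (2 * Real.exp 1)) = psi (-(1/2)) := (psi_base).symm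
        _ < psi u := psi_strictMono (Set.self_mem_Ici) (le_of_lt hr) hr
        _ = u * Real.exp (2 * u) := rfl
    · intro hw
      obtain ⟨u, hu, hua⟩ := psi_surj hw
      set E := Real.exp (2 * u) with hE
      have hEpos : 0 < E := Real.exp_pos _
      set W : ℂ := ⟨u, w.im / E⟩ with hW
      have hWre : -(1/2 : ℝ) < W.re := hu
      set z := W / (1 + W) with hz
      have hzm : ‖z‖ < 1 := inv_mobius_mem hWre
      refine ⟨z, ?_, ?_⟩
      · simp [mem_ball, Complex.dist_eq, hzm]
      · rw [hval z hzm]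
        have heq : z / (1 - z) = W := inv_mobius_eq hWre
        rw [heq]
        have hWre' : W.re = u := rfl
        have hWim : W.im = w.im / E := rfl
        apply Complex.ext
        · simp only [Complex.mul_re, Complex.ofReal_re, Complex.ofReal_im, mul_zero, sub_zero]
          exact hua
        · simp only [Complex.mul_im, Complex.ofReal_re, Complex.ofReal_im, mul_zero, zero_add]
          show w.im / E * Real.exp (2 * u) = w.im
          field_simp
          rfl
end

section
/- Define the log-harmonic two-slits mapping LS by LS(z) = (z/(1 − z²))·|1 − z²|·exp(Re(2z²/(1 − z²))), which is defined for all z ≠ ±1. Then LS(e^{iθ}) = i/e for every θ ∈ (0, π), and LS(e^{iθ}) = −i/e for every θ ∈ (π, 2π). -/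
open Complex Metric Set

theorem stmt_16 (LS : ℂ → ℂ)
    (hLS : ∀ z : ℂ, z ≠ 1 → z ≠ -1 →
        LS z = z / (1 - z ^ 2) * ((‖1 - z ^ 2‖ : ℝ) : ℂ) *
          ((Real.exp ((2 * z ^ 2 / (1 - z ^ 2)).re) : ℝ) : ℂ)) :
    (∀ θ ∈ Set.Ioo (0 : ℝ) Real.pi,
        LS (Complex.exp (θ * Complex.I)) = Complex.I / Real.exp 1) ∧
      ∀ θ ∈ Set.Ioo Real.pi (2 * Real.pi),
        LS (Complex.exp (θ * Complex.I)) = -Complex.I / Real.exp 1 := by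
  have main : ∀ θ : ℝ, Real.sin θ ≠ 0 →
      LS (Complex.exp (θ * Complex.I)) =
        ((|Real.sin θ| / Real.sin θ : ℝ) : ℂ) * Complex.I / Real.exp 1 := by
    intro θ hs
    set s := Real.sin θ with hsdef
    set c := Real.cos θ with hcdef
    have hz : Complex.exp (θ * Complex.I) = (c : ℂ) + (s : ℂ) * Complex.I := by
      rw [Complex.exp_mul_I, Complex.ofReal_cos, Complex.ofReal_sin]
    set z : ℂ := (c : ℂ) + (s : ℂ) * Complex.I with hzdef
    rw [hz]
    have hpy : (s : ℂ) ^ 2 + (c : ℂ) ^ 2 = 1 := by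
      exact_mod_cast congrArg (Complex.ofReal) (Real.sin_sq_add_cos_sq θ)
    have hsC : (s : ℂ) ≠ 0 := Complex.ofReal_ne_zero.mpr hs
    have hz0 : z ≠ 0 := by rw [← hz]; exact Complex.exp_ne_zero _
    have hze : ‖z‖ = 1 := by
      rw [← hz]; exact Complex.norm_exp_ofReal_mul_I θ
    have h1 : (1 : ℂ) - z ^ 2 = -2 * s * Complex.I * z := by
      rw [hzdef]
      linear_combination (-1 : ℂ) * hpy + (s : ℂ) ^ 2 * Complex.I_sq
    have hden : (1 : ℂ) - z ^ 2 ≠ 0 := by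
      rw [h1]
      exact mul_ne_zero (mul_ne_zero (by simpa using hsC) Complex.I_ne_zero) hz0
    have hne1 : z ≠ 1 := by
      intro h
      apply hs
      have := congrArg Complex.im h
      simpa [hzdef] using this
    have hne2 : z ≠ -1 := by
      intro h
      apply hs
      have := congrArg Complex.im h
      simpa [hzdef] using this
    have A : z / (1 - z ^ 2) = Complex.I / (2 * s) := by
      rw [h1, div_eq_div_iff (by simp [mul_eq_zero, hs, hz0, Complex.I_ne_zero])
        (by simp [mul_eq_zero, hs])]
      linear_combination (2 * (s : ℂ) * z) * Complex.I_sq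
    have B : ‖1 - z ^ 2‖ = 2 * |s| := by
      rw [h1]
      simp [hze]
    have C1 : 2 * z ^ 2 / (1 - z ^ 2) = (-1 : ℂ) + ((c : ℂ) / (s : ℂ)) * Complex.I := by
      rw [h1, div_eq_iff (by simp [mul_eq_zero, hs, hz0, Complex.I_ne_zero]), hzdef]
      field_simp
      ring_nf
      linear_combination ((c:ℂ) * (s:ℂ) * Complex.I + (c:ℂ)^2) * Complex.I_sq
    have C : (2 * z ^ 2 / (1 - z ^ 2)).re = -1 := by
      rw [C1]
      simp [Complex.add_re, Complex.mul_re]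
    rw [hLS z hne1 hne2, A, B, C]
    have hexp : Real.exp (-1) = (Real.exp 1)⁻¹ := by
      rw [← Real.exp_neg]
    rw [hexp]
    have hE : (Real.exp 1 : ℝ) ≠ 0 := (Real.exp_pos 1).ne'
    push_cast
    field_simp
  constructor
  · intro θ hθ
    have hpos : 0 < Real.sin θ := Real.sin_pos_of_pos_of_lt_pi hθ.1 hθ.2
    rw [main θ hpos.ne']
    rw [abs_of_pos hpos, div_self hpos.ne']
    simp
  · intro θ hθ
    have hpos : 0 < Real.sin (θ - Real.pi) := by
      apply Real.sin_pos_of_pos_of_lt_pi <;> [linarith [hθ.1]; linarith [hθ.2]]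
    have hneg : Real.sin θ < 0 := by
      have h := Real.sin_add_pi (θ - Real.pi)
      rw [sub_add_cancel] at h
      linarith
    rw [main θ hneg.ne]
    rw [abs_of_neg hneg]
    rw [neg_div, div_self hneg.ne]
    simp [neg_div]
end

section
/- Define LS on the open unit disk 𝔻 by LS(z) = (z/(1 − z²))·|1 − z²|·exp(Re(2z²/(1 − z²))). Then LS is injective on 𝔻 and the image LS(𝔻) equals ℂ \ {w ∈ ℂ : Re w = 0 and |Im w| ≥ 1/e}, i.e., the complex plane minus the two vertical slits {iv : |v| ≥ 1/e}. -/
open Complex Metric Set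
set_option maxHeartbeats 1000000

noncomputable section

namespace LSaux

def Rf (c ρ : ℝ) : ℝ := Real.sqrt (1 + 2*c*ρ + ρ^2)
def Af (c ρ : ℝ) : ℝ := Real.sqrt ((Rf c ρ + 1 + c*ρ)/2)
def Nf (c ρ : ℝ) : ℝ := Rf c ρ + 2 * Af c ρ + 1
def phi (c ρ : ℝ) : ℝ := ρ * Real.exp (2 * Af c ρ - 2) / Nf c ρ

lemma inner_pos {c : ℝ} (hc : c^2 < 1) (ρ : ℝ) : 0 < 1 + 2*c*ρ + ρ^2 := by
  nlinarith [sq_nonneg (ρ + c)]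

lemma Rf_nonneg (c ρ : ℝ) : 0 ≤ Rf c ρ := Real.sqrt_nonneg _

lemma Rf_pos {c : ℝ} (hc : c^2 < 1) (ρ : ℝ) : 0 < Rf c ρ :=
  Real.sqrt_pos.2 (inner_pos hc ρ)

lemma Rf_sq {c : ℝ} (hc : c^2 < 1) (ρ : ℝ) : (Rf c ρ)^2 = 1 + 2*c*ρ + ρ^2 :=
  Real.sq_sqrt (inner_pos hc ρ).le

lemma inner2_pos {c : ℝ} (hc : c^2 < 1) (ρ : ℝ) :
    0 < Rf c ρ + 1 + c*ρ := by
  nlinarith [Rf_sq hc ρ, Rf_nonneg c ρ]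

lemma Af_nonneg (c ρ : ℝ) : 0 ≤ Af c ρ := Real.sqrt_nonneg _

lemma Af_sq {c : ℝ} (hc : c^2 < 1) (ρ : ℝ) :
    (Af c ρ)^2 = (Rf c ρ + 1 + c*ρ)/2 :=
  Real.sq_sqrt (by linarith [inner2_pos hc ρ])

lemma Af_pos {c : ℝ} (hc : c^2 < 1) (ρ : ℝ) : 0 < Af c ρ :=
  Real.sqrt_pos.2 (by linarith [inner2_pos hc ρ])

lemma Nf_pos (c ρ : ℝ) : 0 < Nf c ρ := by
  have := Rf_nonneg c ρ; have := Af_nonneg c ρ; unfold Nf; linarith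

lemma phi_pos {c : ℝ} {ρ : ℝ} (hρ : 0 < ρ) : 0 < phi c ρ :=
  div_pos (mul_pos hρ (Real.exp_pos _)) (Nf_pos c ρ)

lemma continuous_Rf (c : ℝ) : Continuous (Rf c) := by
  unfold Rf; fun_prop

lemma continuous_Af (c : ℝ) : Continuous (Af c) := by
  unfold Af Rf; fun_prop

lemma continuous_phi (c : ℝ) : Continuous (phi c) := by
  unfold phi Nf Af Rf
  apply Continuous.div
  · fun_prop
  · fun_prop
  · intro x
    have := Nf_pos c x
    unfold Nf at this; positivity


lemma hasDerivAt_Rf {c : ℝ} (hc : c^2 < 1) (ρ : ℝ) :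
    HasDerivAt (Rf c) ((2*c + 2*ρ) / (2 * Rf c ρ)) ρ := by
  have hpoly : HasDerivAt (fun x : ℝ => 1 + 2*c*x + x^2) (2*c + 2*ρ) ρ := by
    have := (((hasDerivAt_id ρ).const_mul (2*c)).const_add 1).add ((hasDerivAt_id ρ).pow 2)
    refine this.congr_deriv ?_
    simp
  exact hpoly.sqrt (ne_of_gt (inner_pos hc ρ))

lemma hasDerivAt_Af {c : ℝ} (hc : c^2 < 1) (ρ : ℝ) :
    HasDerivAt (Af c) ((((2*c + 2*ρ) / (2 * Rf c ρ) + c)/2) / (2 * Af c ρ)) ρ := by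
  have hin : HasDerivAt (fun x : ℝ => (Rf c x + 1 + c*x)/2) (((2*c + 2*ρ) / (2 * Rf c ρ) + c)/2) ρ := by
    have := (((hasDerivAt_Rf hc ρ).add_const 1).add ((hasDerivAt_id ρ).const_mul c)).div_const 2
    refine this.congr_deriv ?_
    ring
  exact hin.sqrt (ne_of_gt (by linarith [inner2_pos hc ρ]))

lemma hasDerivAt_phi {c : ℝ} (hc : c^2 < 1) {ρ : ℝ} (hρ : 0 < ρ) :
    HasDerivAt (phi c) (Af c ρ * phi c ρ / ρ) ρ := by
  set dR := (2*c + 2*ρ) / (2 * Rf c ρ) with hdR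
  set dA := (((2*c + 2*ρ) / (2 * Rf c ρ) + c)/2) / (2 * Af c ρ) with hdA
  have hA := hasDerivAt_Af hc ρ
  have hR := hasDerivAt_Rf hc ρ
  have hE : HasDerivAt (fun x => Real.exp (2 * Af c x - 2))
      (Real.exp (2 * Af c ρ - 2) * (2 * dA)) ρ := by
    have h2A : HasDerivAt (fun x => 2 * Af c x - 2) (2 * dA) ρ := by
      simpa using (hA.const_mul 2).sub_const 2
    simpa [mul_comm] using h2A.exp
  have hNum : HasDerivAt (fun x => x * Real.exp (2 * Af c x - 2))
      (1 * Real.exp (2 * Af c ρ - 2) + ρ * (Real.exp (2 * Af c ρ - 2) * (2 * dA))) ρ :=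
    (hasDerivAt_id ρ).mul hE
  have hN : HasDerivAt (Nf c) (dR + (2 * dA + 0)) ρ := by
    unfold Nf
    have := (hR.add (hA.const_mul 2)).add_const 1
    refine this.congr_deriv ?_
    ring
  have hDiv := hNum.div hN (ne_of_gt (Nf_pos c ρ))
  have hfun : ((fun x => x * Real.exp (2 * Af c x - 2)) / Nf c) = phi c := rfl
  rw [hfun] at hDiv
  refine hDiv.congr_deriv (Eq.symm ?_)
  have h1 : 2 * (Af c ρ)^2 = Rf c ρ + 1 + c*ρ := by
    have := Af_sq hc ρ; linarith
  have h2 := Rf_sq hc ρ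
  have hApos := Af_pos hc ρ
  have hRpos := Rf_pos hc ρ
  have hNpos := Nf_pos c ρ
  have hNdef : Nf c ρ = Rf c ρ + 2 * Af c ρ + 1 := rfl
  have hphidef : phi c ρ = ρ * Real.exp (2 * Af c ρ - 2) / Nf c ρ := rfl
  set A := Af c ρ
  set R := Rf c ρ
  set N := Nf c ρ
  set E := Real.exp (2 * A - 2)
  rw [hphidef]
  have hRne : R ≠ 0 := hRpos.ne'
  have hAne : A ≠ 0 := hApos.ne'
  have hdR' : dR*R = c+ρ := by rw [hdR]; field_simp
  have hdA' : dA*(4*A) = dR + c := by rw [hdA]; field_simp; linear_combination (-4)*hdR'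
  have key : 2*A*(A-1)*N = ρ*(c+ρ) + c*ρ*R + 2*A*c*ρ := by
    rw [hNdef]; linear_combination (R+2*A-1)*h1 + h2
  have hX : 2*A*R*(A*N - N - 2*ρ*dA*(N-1) + ρ*dR) = 0 := by
    linear_combination (-R*ρ*(N-1))*hdA' + (2*A*ρ - ρ*(N-1))*hdR' + R*key - (c*R*ρ + ρ*(c+ρ))*hNdef
  have hX0 := (mul_eq_zero.1 hX).resolve_left (mul_ne_zero (mul_ne_zero two_ne_zero hAne) hRne)
  have hnum : (1*E + ρ*(E*(2*dA)))*N - ρ*E*(dR+(2*dA+0)) = E*A*N := by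
    linear_combination (-E)*hX0
  rw [hnum]
  field_simp



-- new material

lemma phi_zero (c : ℝ) : phi c 0 = 0 := by simp [phi]

lemma strictMonoOn_phi {c : ℝ} (hc : c^2 < 1) : StrictMonoOn (phi c) (Ici 0) := by
  apply strictMonoOn_of_deriv_pos (convex_Ici 0) ((continuous_phi c).continuousOn)
  intro x hx
  rw [interior_Ici, mem_Ioi] at hx
  rw [(hasDerivAt_phi hc hx).deriv]
  exact div_pos (mul_pos (Af_pos hc x) (phi_pos hx)) hx

lemma Rf_le {c : ℝ} (hc : c^2 < 1) {ρ : ℝ} (hρ : 0 ≤ ρ) : Rf c ρ ≤ 1 + ρ := by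
  have h := Rf_sq hc ρ
  have h0 := Rf_nonneg c ρ
  have hc1 : c ≤ 1 := by nlinarith
  nlinarith

lemma Af_le {c : ℝ} (hc : c^2 < 1) {ρ : ℝ} (hρ : 0 ≤ ρ) : (Af c ρ)^2 ≤ 1 + ρ := by
  have h := Af_sq hc ρ
  have hR := Rf_le hc hρ
  have hc1 : c ≤ 1 := by nlinarith
  nlinarith

lemma phi_upper {c : ℝ} (hc : c^2 < 1) {ρ : ℝ} (h0 : 0 ≤ ρ) (h1 : ρ ≤ 1) :
    phi c ρ ≤ 3 * ρ := by
  have hA2 : (Af c ρ)^2 ≤ 2 := by have := Af_le hc h0; linarith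
  have hA : Af c ρ ≤ 3/2 := by nlinarith [Af_nonneg c ρ]
  have hE : Real.exp (2 * Af c ρ - 2) ≤ 3 := by
    calc Real.exp (2 * Af c ρ - 2) ≤ Real.exp 1 := Real.exp_le_exp.2 (by linarith)
    _ ≤ 3 := by linarith [Real.exp_one_lt_d9.le]
  have hN : 1 ≤ Nf c ρ := by
    have := Rf_nonneg c ρ; have := Af_nonneg c ρ; unfold Nf; linarith
  have hstep : phi c ρ ≤ ρ * Real.exp (2 * Af c ρ - 2) := div_le_self (by positivity) hN
  have : ρ * Real.exp (2 * Af c ρ - 2) ≤ ρ * 3 := mul_le_mul_of_nonneg_left hE h0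
  linarith

lemma exp_cube {x : ℝ} (hx : 0 ≤ x) : x^3/27 ≤ Real.exp x := by
  have h1 : x/3 ≤ Real.exp (x/3) := by linarith [Real.add_one_le_exp (x/3)]
  have h2 : (x/3)^3 ≤ (Real.exp (x/3))^3 :=
    pow_le_pow_left₀ (by positivity) h1 3
  have h3 : (Real.exp (x/3))^3 = Real.exp x := by
    rw [← Real.exp_nat_mul]
    congr 1
    push_cast; ring
  calc x^3/27 = (x/3)^3 := by ring
    _ ≤ (Real.exp (x/3))^3 := h2
    _ = Real.exp x := h3

lemma phi_lower {c s : ℝ} (hcs : c^2 + s^2 = 1) (hs : 0 < s) {ρ : ℝ} (hρ : 2 ≤ ρ) :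
    s^3 * ρ / 1000 ≤ phi c ρ := by
  have hc : c^2 < 1 := by nlinarith
  have hρ0 : (0:ℝ) < ρ := by linarith
  have hA2 := Af_sq hc ρ
  have hR2 := Rf_sq hc ρ
  have hRnn := Rf_nonneg c ρ
  have hAnn := Af_nonneg c ρ
  have hRle := Rf_le hc hρ0.le
  have hc1 : c ≤ 1 := by nlinarith
  have hc1' : -1 ≤ c := by nlinarith
  -- key identity: 2 A² (R - 1 - cρ) = s² ρ²
  have hkey : (2 * (Af c ρ)^2) * (Rf c ρ - 1 - c*ρ) = s^2 * ρ^2 := by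
    have : 2 * (Af c ρ)^2 = Rf c ρ + 1 + c*ρ := by linarith
    rw [this]; nlinarith [hR2]
  have hA2lb : s^2 * ρ / 4 ≤ (Af c ρ)^2 := by
    have hD : Rf c ρ - 1 - c*ρ ≤ 2*ρ := by nlinarith
    have hDpos : 0 < Rf c ρ - 1 - c*ρ := by nlinarith [sq_nonneg (Af c ρ), mul_pos (mul_pos hs hs) (mul_pos hρ0 hρ0)]
    nlinarith [sq_nonneg (Af c ρ)]
  have hAlb : s/2 ≤ Af c ρ := by
    have hsq : (s/2)^2 ≤ (Af c ρ)^2 := by nlinarith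
    calc s/2 = Real.sqrt ((s/2)^2) := (Real.sqrt_sq (by positivity)).symm
      _ ≤ Real.sqrt ((Af c ρ)^2) := Real.sqrt_le_sqrt hsq
      _ = Af c ρ := Real.sqrt_sq hAnn
  have hA3 : s^3 * ρ / 8 ≤ (Af c ρ)^3 := by
    have := mul_le_mul hAlb hA2lb (by positivity) hAnn
    calc s^3*ρ/8 = (s/2) * (s^2*ρ/4) := by ring
      _ ≤ Af c ρ * (Af c ρ)^2 := this
      _ = (Af c ρ)^3 := by ring
  have hEbound : (Af c ρ)^3 / 31 ≤ Real.exp (2 * Af c ρ - 2) := by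
    have h1 : (2*Af c ρ)^3/27 ≤ Real.exp (2 * Af c ρ) := exp_cube (by linarith)
    have h2 : Real.exp (2 * Af c ρ - 2) = Real.exp (2 * Af c ρ) * Real.exp (-2) := by
      rw [← Real.exp_add]; ring_nf
    have h9 : Real.exp 2 ≤ 9 := by
      have h := Real.exp_one_lt_d9.le
      calc Real.exp 2 = Real.exp 1 * Real.exp 1 := by rw [← Real.exp_add]; norm_num
        _ ≤ 3*3 := by nlinarith [Real.exp_pos 1]
        _ = 9 := by norm_num
    have h3 : (1:ℝ)/9 ≤ Real.exp (-2) := by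
      rw [Real.exp_neg]
      rw [show (1:ℝ)/9 = 9⁻¹ by norm_num]
      exact inv_anti₀ (Real.exp_pos 2) h9
    have h4 : (2*Af c ρ)^3/27 * (1/9) ≤ Real.exp (2*Af c ρ) * Real.exp (-2) :=
      mul_le_mul h1 h3 (by norm_num) (Real.exp_pos _).le
    rw [h2]
    calc (Af c ρ)^3/31 ≤ (2*Af c ρ)^3/27 * (1/9) := by nlinarith [pow_nonneg hAnn 3]
      _ ≤ _ := h4
  have hAle : Af c ρ ≤ ρ := by nlinarith [Af_le hc hρ0.le]
  have hNle : Nf c ρ ≤ 4*ρ := by unfold Nf; linarith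
  have hNpos := Nf_pos c ρ
  rw [phi, le_div_iff₀ hNpos]
  have hprod : (0:ℝ) ≤ s^3 * ρ^2 := by positivity
  calc s^3*ρ/1000 * Nf c ρ ≤ s^3*ρ/1000 * (4*ρ) := by
        apply mul_le_mul_of_nonneg_left hNle; positivity
    _ = (4/1000) * (s^3*ρ^2) := by ring
    _ ≤ (1/248) * (s^3*ρ^2) := mul_le_mul_of_nonneg_right (by norm_num) hprod
    _ = ρ * ((s^3*ρ/8)/31) := by ring
    _ ≤ ρ * ((Af c ρ)^3/31) := by
        apply mul_le_mul_of_nonneg_left _ hρ0.le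
        linarith
    _ ≤ ρ * Real.exp (2*Af c ρ - 2) := mul_le_mul_of_nonneg_left hEbound hρ0.le


def qf (a : ℝ) : ℝ := Real.exp (2*a - 2) * ((a - 1)/(a + 1))

lemma qf_zero : qf 0 = -Real.exp (-2) := by
  unfold qf; norm_num

lemma hasDerivAt_qf {a : ℝ} (ha : a ≠ -1) :
    HasDerivAt qf (2 * a^2 * Real.exp (2*a-2) / (a+1)^2) a := by
  have h1 : a + 1 ≠ 0 := by intro h; apply ha; linarith
  have hE : HasDerivAt (fun x : ℝ => Real.exp (2*x - 2)) (Real.exp (2*a-2) * 2) a := by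
    have h2A : HasDerivAt (fun x : ℝ => 2*x - 2) 2 a := by
      simpa using ((hasDerivAt_id a).const_mul 2).sub_const 2
    simpa using h2A.exp
  have hq : HasDerivAt (fun x : ℝ => (x - 1)/(x + 1))
      ((1 * (a+1) - (a-1) * 1)/(a+1)^2) a :=
    ((hasDerivAt_id a).sub_const 1).div ((hasDerivAt_id a).add_const 1) h1
  have := hE.mul hq
  refine this.congr_deriv ?_
  field_simp
  ring

lemma continuousOn_qf : ContinuousOn qf (Ici 0) := by
  apply ContinuousOn.mul
  · fun_prop
  · apply ContinuousOn.div
    · fun_prop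
    · fun_prop
    · intro x hx
      simp only [mem_Ici] at hx
      intro h; linarith

lemma strictMonoOn_qf : StrictMonoOn qf (Ici 0) := by
  apply strictMonoOn_of_deriv_pos (convex_Ici 0) continuousOn_qf
  intro x hx
  rw [interior_Ici, mem_Ioi] at hx
  rw [(hasDerivAt_qf (by linarith)).deriv]
  positivity

lemma qf_large {a : ℝ} (ha : 2 ≤ a) : (1 + a)/3 ≤ qf a := by
  have h1 : (1:ℝ) + a ≤ Real.exp a := by linarith [Real.add_one_le_exp a]
  have h2 : Real.exp a ≤ Real.exp (2*a - 2) := Real.exp_le_exp.2 (by linarith)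
  have h3 : (1:ℝ)/3 ≤ (a - 1)/(a + 1) := by
    rw [div_le_div_iff₀ (by norm_num) (by linarith)]
    linarith
  have hEpos : (0:ℝ) < 1 + a := by linarith
  calc (1+a)/3 = (1+a) * (1/3) := by ring
    _ ≤ Real.exp (2*a-2) * ((a-1)/(a+1)) :=
        mul_le_mul (by linarith) h3 (by norm_num) (Real.exp_pos _).le
    _ = qf a := rfl

/-- surjectivity on the real axis -/
lemma qf_surj {m : ℝ} (hm : -Real.exp (-2) < m) : ∃ a : ℝ, 0 < a ∧ qf a = m := by
  obtain ⟨a₁, ha₁2, ha₁m⟩ : ∃ a₁ : ℝ, 2 ≤ a₁ ∧ m < qf a₁ := by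
    refine ⟨max 2 (3*(m+1)), le_max_left _ _, ?_⟩
    have h := qf_large (le_max_left 2 (3*(m+1)))
    have h2 : 3*(m+1) ≤ max 2 (3*(m+1)) := le_max_right _ _
    nlinarith [h, h2]
  have hsub : Icc (0:ℝ) a₁ ⊆ Ici 0 := fun x hx => hx.1
  have hcont : ContinuousOn qf (Icc 0 a₁) := continuousOn_qf.mono hsub
  have hmem : m ∈ Icc (qf 0) (qf a₁) := by
    constructor
    · rw [qf_zero]; linarith
    · linarith
  obtain ⟨a, ha, hqa⟩ := intermediate_value_Icc (by linarith : (0:ℝ) ≤ a₁) hcont hmem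
  refine ⟨a, ?_, hqa⟩
  rcases eq_or_lt_of_le ha.1 with h0 | h0
  · exfalso; rw [← h0] at hqa; rw [qf_zero] at hqa; linarith
  · exact h0

lemma qf_gt {a : ℝ} (ha : 0 < a) : -Real.exp (-2) < qf a := by
  have := strictMonoOn_qf (self_mem_Ici) (mem_Ici.2 ha.le) ha
  rw [qf_zero] at this; linarith


-- new material 2

def csqrt (u : ℂ) : ℂ :=
  ⟨Real.sqrt ((‖u‖ + u.re)/2),
   if 0 ≤ u.im then Real.sqrt ((‖u‖ - u.re)/2)
   else -Real.sqrt ((‖u‖ - u.re)/2)⟩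

lemma abs_add_re_nonneg (u : ℂ) : 0 ≤ ‖u‖ + u.re := by
  have := abs_le.1 (Complex.abs_re_le_norm u); linarith [this.1]

lemma abs_sub_re_nonneg (u : ℂ) : 0 ≤ ‖u‖ - u.re := by
  have := abs_le.1 (Complex.abs_re_le_norm u); linarith [this.2]

lemma csqrt_re_sq (u : ℂ) : ((csqrt u).re)^2 = (‖u‖ + u.re)/2 :=
  Real.sq_sqrt (by linarith [abs_add_re_nonneg u])

lemma csqrt_im_sq (u : ℂ) : ((csqrt u).im)^2 = (‖u‖ - u.re)/2 := by
  have h := Real.sq_sqrt (by linarith [abs_sub_re_nonneg u] :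
    0 ≤ (‖u‖ - u.re)/2)
  unfold csqrt
  dsimp only
  split_ifs with hsign
  · exact h
  · rw [neg_pow]; simpa using h

lemma csqrt_re_nonneg (u : ℂ) : 0 ≤ (csqrt u).re := Real.sqrt_nonneg _

lemma csqrt_mul_self (u : ℂ) : (csqrt u).re * (csqrt u).im = u.im/2 := by
  have hp : 0 ≤ (‖u‖ + u.re)/2 := by linarith [abs_add_re_nonneg u]
  have hprod : Real.sqrt ((‖u‖ + u.re)/2) * Real.sqrt ((‖u‖ - u.re)/2)
      = |u.im|/2 := by
    rw [← Real.sqrt_mul hp]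
    have : (‖u‖ + u.re)/2 * ((‖u‖ - u.re)/2) = (u.im/2)^2 := by
      have habs : (‖u‖)^2 = u.re^2 + u.im^2 := by
        rw [Complex.sq_norm, Complex.normSq_apply]; ring
      nlinarith [habs]
    rw [this, Real.sqrt_sq_eq_abs, abs_div]
    norm_num
  unfold csqrt
  dsimp only
  split_ifs with hsign
  · rw [hprod, _root_.abs_of_nonneg hsign]
  · push_neg at hsign
    rw [mul_neg, hprod, _root_.abs_of_neg hsign]; ring

lemma csqrt_sq (u : ℂ) : (csqrt u)^2 = u := by
  have h1 := csqrt_re_sq u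
  have h2 := csqrt_im_sq u
  have h3 := csqrt_mul_self u
  apply Complex.ext
  · rw [pow_two, Complex.mul_re]
    nlinarith [h1, h2]
  · rw [pow_two, Complex.mul_im]
    linarith [h3]

lemma csqrt_re_pos {u : ℂ} (him : u.im ≠ 0) : 0 < (csqrt u).re := by
  apply Real.sqrt_pos.2
  have habs : (‖u‖)^2 = u.re^2 + u.im^2 := by
    rw [Complex.sq_norm, Complex.normSq_apply]; ring
  have h : |u.re| < ‖u‖ := by
    nlinarith [norm_nonneg u, abs_nonneg u.re, _root_.sq_abs u.re,
      sq_pos_of_ne_zero him]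
  have := (abs_lt.1 h).1
  linarith

/-- the reduced map Q -/
def Qc (ζ : ℂ) : ℂ := (ζ - 1)/((starRingEnd ℂ) (ζ + 1)) * ((Real.exp (2*ζ.re - 2) : ℝ) : ℂ)

def rr (ζ : ℂ) : ℝ := Real.exp (2*ζ.re - 2) / Complex.normSq (ζ + 1)

lemma rr_pos {ζ : ℂ} (h : ζ + 1 ≠ 0) : 0 < rr ζ :=
  div_pos (Real.exp_pos _) (Complex.normSq_pos.2 h)

lemma Qc_eq {ζ : ℂ} (h : ζ + 1 ≠ 0) : Qc ζ = (ζ^2 - 1) * ((rr ζ : ℝ) : ℂ) := by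
  unfold Qc rr
  have hconj : (starRingEnd ℂ) (ζ+1) ≠ 0 := star_ne_zero.mpr h
  have hns : (Complex.normSq (ζ+1) : ℂ) ≠ 0 := by
    simpa [Complex.normSq_eq_zero] using h
  set E : ℂ := ((Real.exp (2*ζ.re - 2) : ℝ) : ℂ) with hE
  rw [Complex.ofReal_div, ← hE]
  have key : ((Complex.normSq (ζ+1) : ℝ) : ℂ) = (ζ+1) * ((starRingEnd ℂ) ζ + 1) := by
    rw [(Complex.mul_conj (ζ+1)).symm, map_add, map_one]
  have h2 : (starRingEnd ℂ) ζ + 1 ≠ 0 := by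
    rw [map_add, map_one] at hconj; exact hconj
  rw [show (starRingEnd ℂ) (ζ+1) = (starRingEnd ℂ) ζ + 1 by rw [map_add, map_one]]
  field_simp
  linear_combination E * (ζ - 1) * key

lemma Qc_im {ζ : ℂ} (h : ζ + 1 ≠ 0) : (Qc ζ).im = 2*ζ.re*ζ.im * rr ζ := by
  rw [Qc_eq h]
  rw [Complex.mul_im]
  simp only [Complex.ofReal_re, Complex.ofReal_im, mul_zero, add_zero]
  have : (ζ^2 - 1).im = 2*ζ.re*ζ.im := by
    rw [Complex.sub_im, pow_two, Complex.mul_im, Complex.one_im]; ring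
  rw [this]
  ring

lemma Qc_real {a : ℝ} (ha : 0 < a) : Qc (a:ℂ) = ((qf a : ℝ) : ℂ) := by
  have h1 : ((a:ℂ) + 1) ≠ 0 := by
    rw [show ((a:ℂ)+1) = ((a+1 : ℝ):ℂ) by push_cast; ring]
    rw [Ne, Complex.ofReal_eq_zero]
    linarith
  unfold Qc qf
  rw [show ((a:ℂ).re) = a from Complex.ofReal_re a]
  rw [show (starRingEnd ℂ) ((a:ℂ)+1) = ((a+1:ℝ):ℂ) by
    rw [map_add, map_one, Complex.conj_ofReal]; push_cast; ring]
  rw [show ((a:ℂ) - 1) = ((a-1:ℝ):ℂ) by push_cast; ring]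
  push_cast
  ring

lemma Qc_conj (ζ : ℂ) : Qc ((starRingEnd ℂ) ζ) = (starRingEnd ℂ) (Qc ζ) := by
  unfold Qc
  rw [map_mul, map_div₀]
  simp only [map_sub, map_add, map_one, Complex.conj_conj, Complex.conj_ofReal,
    Complex.conj_re]

lemma sqrt_unique {ζ₁ ζ₂ : ℂ} (h1 : 0 < ζ₁.re) (h2 : 0 < ζ₂.re) (h : ζ₁^2 = ζ₂^2) :
    ζ₁ = ζ₂ := by
  have hf : (ζ₁ - ζ₂) * (ζ₁ + ζ₂) = 0 := by linear_combination h
  rcases mul_eq_zero.1 hf with h0 | h0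
  · linear_combination h0
  · exfalso
    have : (ζ₁ + ζ₂).re = 0 := by rw [h0]; rfl
    rw [Complex.add_re] at this
    linarith

lemma quad_spec {e : ℂ} (he : ‖e‖ = 1) (hs : 0 < e.im) {ρ : ℝ} (hρ : 0 < ρ) :
    0 < (csqrt (1 + (ρ:ℂ)*e)).re ∧
    (csqrt (1 + (ρ:ℂ)*e)).im ≠ 0 ∧
    Qc (csqrt (1 + (ρ:ℂ)*e)) = ((phi e.re ρ : ℝ) : ℂ) * e := by
  set c := e.re
  set s := e.im
  have hcs : c^2 + s^2 = 1 := by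
    have := Complex.sq_norm e
    rw [he] at this
    rw [Complex.normSq_apply] at this
    simpa [pow_two] using this.symm
  have hc : c^2 < 1 := by nlinarith
  set u : ℂ := 1 + (ρ:ℂ)*e with hu
  have hure : u.re = 1 + ρ*c := by
    simp [hu, Complex.add_re, Complex.mul_re, Complex.ofReal_re, Complex.ofReal_im, c]
  have huim : u.im = ρ*s := by
    simp [hu, Complex.add_im, Complex.mul_im, Complex.ofReal_re, Complex.ofReal_im, s]
  have huim0 : u.im ≠ 0 := by rw [huim]; positivity
  have habs : ‖u‖ = Rf c ρ := by
    rw [Complex.norm_def, Rf]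
    congr 1
    rw [Complex.normSq_apply, hure, huim]
    nlinarith [hcs]
  set ζ := csqrt u with hζ
  have hζre : ζ.re = Af c ρ := by
    rw [hζ]
    show Real.sqrt ((‖u‖ + u.re)/2) = _
    rw [habs, hure, Af]
    congr 2
    ring
  have hζrepos : 0 < ζ.re := by rw [hζre]; exact Af_pos hc ρ
  have hζsq : ζ^2 = u := csqrt_sq u
  have hζim : ζ.im ≠ 0 := by
    intro h0
    have : (ζ^2).im = 0 := by rw [pow_two, Complex.mul_im, h0]; ring
    rw [hζsq] at this
    exact huim0 this
  refine ⟨hζrepos, hζim, ?_⟩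
  have hζ1 : ζ + 1 ≠ 0 := by
    intro h0
    have : (ζ+1).re = 0 := by rw [h0]; rfl
    rw [Complex.add_re, Complex.one_re] at this
    linarith
  have hnormζ : Complex.normSq ζ = Rf c ρ := by
    have : (‖ζ‖)^2 = ‖(ζ^2)‖ := by rw [norm_pow]
    rw [hζsq, habs] at this
    rw [← Complex.sq_norm, this]
  have hN : Complex.normSq (ζ+1) = Nf c ρ := by
    rw [Complex.normSq_apply, Complex.add_re, Complex.add_im, Complex.one_re, Complex.one_im]
    have h2 : Complex.normSq ζ = ζ.re*ζ.re + ζ.im*ζ.im := Complex.normSq_apply ζ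
    rw [Nf, ← hnormζ, h2, hζre]
    ring
  rw [Qc_eq hζ1, hζsq]
  rw [show u - 1 = (ρ:ℂ)*e by rw [hu]; ring]
  rw [rr, hN, hζre]
  rw [phi]
  have hNne : Nf c ρ ≠ 0 := by
    have : (0:ℝ) < Nf c ρ := by
      rw [Nf]
      have := Real.sqrt_nonneg (1 + 2*c*ρ + ρ^2)
      have := Real.sqrt_nonneg ((Rf c ρ + 1 + c*ρ)/2)
      rw [Rf, Af]
      positivity
    linarith
  push_cast
  field_simp



lemma Qc_ne_slit {ζ : ℂ} (hre : 0 < ζ.re) :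
    ¬((Qc ζ).im = 0 ∧ (Qc ζ).re ≤ -Real.exp (-2)) := by
  rintro ⟨him, hle⟩
  have hζ1 : ζ + 1 ≠ 0 := by
    intro h0
    have : (ζ+1).re = 0 := by rw [h0]; rfl
    rw [Complex.add_re, Complex.one_re] at this
    linarith
  have hrr := rr_pos hζ1
  rw [Qc_im hζ1] at him
  have hzim : ζ.im = 0 := by
    rcases mul_eq_zero.1 him with h0 | h0
    · rcases mul_eq_zero.1 h0 with h1 | h1
      · linarith
      · exact h1
    · exfalso; linarith
  have hζeq : ζ = ((ζ.re : ℝ) : ℂ) := Complex.ext rfl (by simp [hzim])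
  rw [hζeq, Qc_real hre] at hle
  rw [Complex.ofReal_re] at hle
  have := qf_gt hre
  linarith

lemma unit_sq {e : ℂ} (he : ‖e‖ = 1) : e.re^2 + e.im^2 = 1 := by
  have := Complex.sq_norm e
  rw [he] at this
  rw [Complex.normSq_apply] at this
  nlinarith

lemma plus_one_ne {ζ : ℂ} (h : 0 < ζ.re) : ζ + 1 ≠ 0 := by
  intro h0
  have : (ζ+1).re = 0 := by rw [h0]; rfl
  rw [Complex.add_re, Complex.one_re] at this; linarith

lemma Qc_inj_upper {ζ₁ ζ₂ : ℂ} (h1 : 0 < ζ₁.re) (h2 : 0 < ζ₂.re)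
    (hb1 : 0 < ζ₁.im) (hb2 : 0 < ζ₂.im) (h : Qc ζ₁ = Qc ζ₂) : ζ₁ = ζ₂ := by
  have hζ1 := plus_one_ne h1
  have hζ2 := plus_one_ne h2
  set η₁ := ζ₁^2 - 1 with hη₁
  set η₂ := ζ₂^2 - 1 with hη₂
  have hη₁im : η₁.im = 2*ζ₁.re*ζ₁.im := by
    rw [hη₁, Complex.sub_im, pow_two, Complex.mul_im, Complex.one_im]; ring
  have hη₂im : η₂.im = 2*ζ₂.re*ζ₂.im := by
    rw [hη₂, Complex.sub_im, pow_two, Complex.mul_im, Complex.one_im]; ring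
  have hη₁im0 : 0 < η₁.im := by rw [hη₁im]; positivity
  have hη₂im0 : 0 < η₂.im := by rw [hη₂im]; positivity
  have hη₁0 : η₁ ≠ 0 := fun h0 => by rw [h0] at hη₁im0; simp at hη₁im0
  have hη₂0 : η₂ ≠ 0 := fun h0 => by rw [h0] at hη₂im0; simp at hη₂im0
  set ρ₁ := ‖η₁‖ with hρ₁
  set ρ₂ := ‖η₂‖ with hρ₂
  have hρ₁pos : 0 < ρ₁ := norm_pos_iff.2 hη₁0
  have hρ₂pos : 0 < ρ₂ := norm_pos_iff.2 hη₂0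
  set e : ℂ := ((ρ₁⁻¹ : ℝ) : ℂ) * η₁ with he
  have habse : ‖e‖ = 1 := by
    rw [he, norm_mul, Complex.norm_real, Real.norm_eq_abs, abs_of_pos (inv_pos.2 hρ₁pos), ← hρ₁]
    field_simp
  have heim : 0 < e.im := by
    rw [he, Complex.mul_im]
    simp only [Complex.ofReal_re, Complex.ofReal_im, zero_mul, add_zero]
    positivity
  have hη₁e : η₁ = ((ρ₁:ℝ):ℂ) * e := by
    rw [he]
    have : ((ρ₁:ℝ):ℂ) ≠ 0 := Complex.ofReal_ne_zero.2 (ne_of_gt hρ₁pos)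
    push_cast; field_simp
  have hr₁ := rr_pos hζ1
  have hr₂ := rr_pos hζ2
  have h' : η₁ * ((rr ζ₁ :ℝ):ℂ) = η₂ * ((rr ζ₂:ℝ):ℂ) := by
    rw [← Qc_eq hζ1, ← Qc_eq hζ2]; exact h
  have habs' : ρ₁ * rr ζ₁ = ρ₂ * rr ζ₂ := by
    have h2 := congrArg (‖·‖) h'
    simpa [norm_mul, Complex.norm_real, Real.norm_eq_abs, _root_.abs_of_pos hr₁, _root_.abs_of_pos hr₂,
      ← hρ₁, ← hρ₂] using h2
  have hcc : ((ρ₁:ℝ):ℂ) * ((rr ζ₁:ℝ):ℂ) = ((ρ₂:ℝ):ℂ) * ((rr ζ₂:ℝ):ℂ) := by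
    exact_mod_cast congrArg (fun x : ℝ => (x : ℂ)) habs'
  have hG : (η₂ * ((ρ₁:ℝ):ℂ) - ((ρ₂:ℝ):ℂ) * η₁) * ((rr ζ₂:ℝ):ℂ) = 0 := by
    linear_combination (-((ρ₁:ℝ):ℂ)) * h' + η₁ * hcc
  have h0 : η₂ * ((ρ₁:ℝ):ℂ) = ((ρ₂:ℝ):ℂ) * η₁ := by
    rcases mul_eq_zero.1 hG with h0 | h0
    · linear_combination h0
    · exact absurd h0 (Complex.ofReal_ne_zero.2 (ne_of_gt hr₂))
  have hη₂e : η₂ = ((ρ₂:ℝ):ℂ) * e := by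
    rw [he]
    have hne : ((ρ₁:ℝ):ℂ) ≠ 0 := Complex.ofReal_ne_zero.2 (ne_of_gt hρ₁pos)
    push_cast; field_simp
    linear_combination h0
  have hsq₁ : ζ₁^2 = 1 + ((ρ₁:ℝ):ℂ) * e := by rw [← hη₁e, hη₁]; ring
  have hsq₂ : ζ₂^2 = 1 + ((ρ₂:ℝ):ℂ) * e := by rw [← hη₂e, hη₂]; ring
  obtain ⟨hq1re, hq1im, hq1⟩ := quad_spec habse heim hρ₁pos
  obtain ⟨hq2re, hq2im, hq2⟩ := quad_spec habse heim hρ₂pos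
  have hζ₁eq : ζ₁ = csqrt (1 + ((ρ₁:ℝ):ℂ)*e) :=
    sqrt_unique h1 hq1re (by rw [csqrt_sq]; exact hsq₁)
  have hζ₂eq : ζ₂ = csqrt (1 + ((ρ₂:ℝ):ℂ)*e) :=
    sqrt_unique h2 hq2re (by rw [csqrt_sq]; exact hsq₂)
  have hQv : ((phi e.re ρ₁ : ℝ):ℂ) * e = ((phi e.re ρ₂ : ℝ):ℂ) * e := by
    rw [← hq1, ← hq2, ← hζ₁eq, ← hζ₂eq]; exact h
  have hene : e ≠ 0 := by intro h0; rw [h0] at habse; simp at habse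
  have hphieq : phi e.re ρ₁ = phi e.re ρ₂ := by
    have := mul_right_cancel₀ hene hQv
    exact_mod_cast this
  have hcs := unit_sq habse
  have hce : e.re^2 < 1 := by nlinarith
  have hρeq : ρ₁ = ρ₂ :=
    (strictMonoOn_phi hce).injOn (mem_Ici.2 hρ₁pos.le) (mem_Ici.2 hρ₂pos.le) hphieq
  rw [hζ₁eq, hζ₂eq, hρeq]

lemma Qc_inj {ζ₁ ζ₂ : ℂ} (h1 : 0 < ζ₁.re) (h2 : 0 < ζ₂.re) (h : Qc ζ₁ = Qc ζ₂) :
    ζ₁ = ζ₂ := by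
  have hζ1 := plus_one_ne h1
  have hζ2 := plus_one_ne h2
  have hr₁ := rr_pos hζ1
  have hr₂ := rr_pos hζ2
  have him : 2*ζ₁.re*ζ₁.im * rr ζ₁ = 2*ζ₂.re*ζ₂.im * rr ζ₂ := by
    rw [← Qc_im hζ1, ← Qc_im hζ2, h]
  have him' : (2*ζ₁.re*rr ζ₁) * ζ₁.im = (2*ζ₂.re*rr ζ₂) * ζ₂.im := by
    linear_combination him
  rcases lt_trichotomy ζ₁.im 0 with hb1 | hb1 | hb1
  · have hb2 : ζ₂.im < 0 := by
      have hL := mul_neg_of_pos_of_neg (show (0:ℝ) < 2*ζ₁.re*rr ζ₁ by positivity) hb1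
      rw [him'] at hL
      by_contra hge
      push_neg at hge
      exact absurd hL (not_lt.2 (mul_nonneg (by positivity) hge))
    have hconj : Qc ((starRingEnd ℂ) ζ₁) = Qc ((starRingEnd ℂ) ζ₂) := by
      rw [Qc_conj, Qc_conj, h]
    have heq := Qc_inj_upper (by rwa [Complex.conj_re]) (by rwa [Complex.conj_re])
      (by rw [Complex.conj_im]; linarith) (by rw [Complex.conj_im]; linarith) hconj
    exact (starRingEnd ℂ).injective heq
  · have hb2 : ζ₂.im = 0 := by
      rw [hb1, mul_zero] at him'
      rcases mul_eq_zero.1 him'.symm with h0 | h0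
      · exact absurd h0 (by positivity)
      · exact h0
    have he1 : ζ₁ = ((ζ₁.re : ℝ):ℂ) := Complex.ext rfl (by simp [hb1])
    have he2 : ζ₂ = ((ζ₂.re : ℝ):ℂ) := Complex.ext rfl (by simp [hb2])
    rw [he1, he2, Qc_real h1, Qc_real h2] at h
    have : qf ζ₁.re = qf ζ₂.re := by exact_mod_cast h
    have hre : ζ₁.re = ζ₂.re :=
      strictMonoOn_qf.injOn (mem_Ici.2 h1.le) (mem_Ici.2 h2.le) this
    rw [he1, he2, hre]
  · have hb2 : 0 < ζ₂.im := by
      have hL := mul_pos (show (0:ℝ) < 2*ζ₁.re*rr ζ₁ by positivity) hb1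
      rw [him'] at hL
      by_contra hge
      push_neg at hge
      exact absurd hL (not_lt.2 (mul_nonpos_of_nonneg_of_nonpos (by positivity) hge))
    exact Qc_inj_upper h1 h2 hb1 hb2 h

lemma Qc_surj_upper {v : ℂ} (him : 0 < v.im) : ∃ ζ : ℂ, 0 < ζ.re ∧ Qc ζ = v := by
  have hv0 : v ≠ 0 := fun h0 => by rw [h0] at him; simp at him
  set M := ‖v‖ with hM
  have hMpos : 0 < M := norm_pos_iff.2 hv0
  set e : ℂ := ((M⁻¹:ℝ):ℂ) * v with he
  have habse : ‖e‖ = 1 := by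
    rw [he, norm_mul, Complex.norm_real, Real.norm_eq_abs, abs_of_pos (inv_pos.2 hMpos), ← hM]
    field_simp
  have heim : 0 < e.im := by
    rw [he, Complex.mul_im]
    simp only [Complex.ofReal_re, Complex.ofReal_im, zero_mul, add_zero]
    positivity
  have hcs := unit_sq habse
  have hce : e.re^2 < 1 := by nlinarith
  set s := e.im with hs
  set ρa := min 1 (M/6) with hρa
  set ρb := max 2 (1000*(M+1)/s^3) with hρb
  have hρapos : 0 < ρa := lt_min one_pos (by positivity)
  have hρale1 : ρa ≤ 1 := min_le_left _ _
  have hab : ρa ≤ ρb := le_trans hρale1 (le_trans one_le_two (le_max_left _ _))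
  have hlow : phi e.re ρa ≤ M/2 := by
    have hup := phi_upper hce hρapos.le hρale1
    have h3 : 3 * ρa ≤ 3*(M/6) := by
      have := min_le_right 1 (M/6); linarith
    linarith
  have hhigh : M ≤ phi e.re ρb := by
    have h2 := phi_lower hcs heim (le_max_left 2 (1000*(M+1)/s^3))
    have h3 : 1000*(M+1)/s^3 ≤ ρb := le_max_right _ _
    have hs3 : (0:ℝ) < s^3 := by positivity
    rw [div_le_iff₀ hs3] at h3
    have : M + 1 ≤ s^3*ρb/1000 := by
      rw [le_div_iff₀ (by norm_num : (0:ℝ) < 1000)]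
      nlinarith
    linarith
  obtain ⟨ρ, hρmem, hρval⟩ := intermediate_value_Icc hab
    ((continuous_phi e.re).continuousOn) ⟨by linarith, hhigh⟩
  have hρpos : 0 < ρ := lt_of_lt_of_le hρapos hρmem.1
  obtain ⟨hre, him2, hQ⟩ := quad_spec habse heim hρpos
  refine ⟨csqrt (1 + (ρ:ℂ)*e), hre, ?_⟩
  rw [hQ, hρval, he]
  have hMne : ((M:ℝ):ℂ) ≠ 0 := Complex.ofReal_ne_zero.2 (ne_of_gt hMpos)
  push_cast
  field_simp

lemma Qc_surj {v : ℂ} (hv : ¬(v.im = 0 ∧ v.re ≤ -Real.exp (-2))) :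
    ∃ ζ : ℂ, 0 < ζ.re ∧ Qc ζ = v := by
  rcases lt_trichotomy v.im 0 with hb | hb | hb
  · obtain ⟨ζ, hre, hQ⟩ := Qc_surj_upper (v := (starRingEnd ℂ) v)
      (by rw [Complex.conj_im]; linarith)
    refine ⟨(starRingEnd ℂ) ζ, by rwa [Complex.conj_re], ?_⟩
    rw [Qc_conj, hQ, Complex.conj_conj]
  · have hre : -Real.exp (-2) < v.re := by
      by_contra hle
      push_neg at hle
      exact hv ⟨hb, hle⟩
    obtain ⟨a, hapos, haval⟩ := qf_surj hre
    refine ⟨((a:ℝ):ℂ), by simpa using hapos, ?_⟩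
    rw [Qc_real hapos, haval]
    exact Complex.ext (by simp) (by simp [hb.symm])
  · exact Qc_surj_upper hb


def zeta (z : ℂ) : ℂ := (1 + z^2)/(1 - z^2)

lemma one_sub_sq_ne {z : ℂ} (hz : ‖z‖ < 1) : 1 - z^2 ≠ 0 := by
  intro h0
  have h1 : z^2 = 1 := by linear_combination -h0
  have h2 : ‖(z^2)‖ = 1 := by rw [h1, norm_one]
  rw [norm_pow] at h2
  nlinarith [norm_nonneg z]

lemma zeta_re_pos {z : ℂ} (hz : ‖z‖ < 1) : 0 < (zeta z).re := by
  have hne := one_sub_sq_ne hz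
  have hd : 0 < Complex.normSq (1 - z^2) := Complex.normSq_pos.2 hne
  have hlt : Complex.normSq (z^2) < 1 := by
    have h1 : Complex.normSq (z^2) = (‖z‖)^4 := by
      rw [← Complex.sq_norm, norm_pow]
      ring
    rw [h1]
    exact pow_lt_one₀ (norm_nonneg z) hz (by norm_num)
  rw [zeta, Complex.div_re, ← add_div]
  have hsum : (1+z^2).re * (1-z^2).re + (1+z^2).im * (1-z^2).im
      = 1 - Complex.normSq (z^2) := by
    simp only [Complex.add_re, Complex.sub_re, Complex.add_im, Complex.sub_im,
      Complex.one_re, Complex.one_im, Complex.normSq_apply]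
    ring
  rw [hsum]
  exact div_pos (by linarith) hd

lemma zeta_sub_one {z : ℂ} (hz : ‖z‖ < 1) :
    zeta z - 1 = 2*z^2/(1 - z^2) := by
  have hne := one_sub_sq_ne hz
  rw [zeta]
  field_simp
  ring

lemma zeta_add_one {z : ℂ} (hz : ‖z‖ < 1) :
    zeta z + 1 = 2/(1 - z^2) := by
  have hne := one_sub_sq_ne hz
  rw [zeta]
  field_simp
  norm_num

lemma zeta_z_sq {z : ℂ} (hz : ‖z‖ < 1) :
    (zeta z - 1)/(zeta z + 1) = z^2 := by
  have hne := one_sub_sq_ne hz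
  have h2 : (2:ℂ)/(1-z^2) ≠ 0 := div_ne_zero two_ne_zero hne
  rw [zeta_sub_one hz, zeta_add_one hz, div_eq_iff h2]
  field_simp

lemma LS_sq {z : ℂ} (hz : ‖z‖ < 1) :
    (z / (1 - z^2) * ((‖(1 - z^2)‖ : ℝ) : ℂ) *
      ((Real.exp ((2 * z^2 / (1 - z^2)).re) : ℝ) : ℂ))^2 = Qc (zeta z) := by
  have hne := one_sub_sq_ne hz
  have hconj : (starRingEnd ℂ) (1 - z^2) ≠ 0 := star_ne_zero.mpr hne
  have hre : (zeta z).re - 1 = (2 * z^2 / (1 - z^2)).re := by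
    have h := congrArg Complex.re (zeta_sub_one hz)
    rw [Complex.sub_re, Complex.one_re] at h
    exact h
  have hexp : ((Real.exp ((2 * z^2 / (1 - z^2)).re) : ℝ) : ℂ)^2
      = ((Real.exp (2*(zeta z).re - 2) : ℝ) : ℂ) := by
    rw [← Complex.ofReal_pow]
    congr 1
    rw [pow_two, ← Real.exp_add]
    congr 1
    linarith
  have habs2 : ((‖(1 - z^2)‖ : ℝ) : ℂ)^2
      = (1 - z^2) * (starRingEnd ℂ) (1 - z^2) := by
    rw [← Complex.ofReal_pow, Complex.sq_norm]
    exact (Complex.mul_conj (1 - z^2)).symm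
  have hconj1 : (starRingEnd ℂ) (zeta z + 1) = 2 / (starRingEnd ℂ) (1 - z^2) := by
    rw [zeta_add_one hz, map_div₀]
    simp [map_ofNat]
  have key : (z / (1 - z^2))^2 * (((‖(1 - z^2)‖ : ℝ) : ℂ))^2 *
      (((Real.exp ((2 * z^2 / (1 - z^2)).re) : ℝ) : ℂ))^2 = Qc (zeta z) := by
    rw [hexp, habs2, Qc, hconj1, zeta_sub_one hz]
    field_simp
  rw [← key]
  ring

lemma zeta_surj {ζ : ℂ} (hre : 0 < ζ.re) :
    ∃ z : ℂ, ‖z‖ < 1 ∧ zeta z = ζ := by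
  have hζ1 : ζ + 1 ≠ 0 := plus_one_ne hre
  set u := (ζ-1)/(ζ+1) with hu
  have habs : ‖u‖ < 1 := by
    rw [hu, norm_div, div_lt_one (norm_pos_iff.2 hζ1)]
    have h1 : (‖(ζ-1)‖)^2 < (‖(ζ+1)‖)^2 := by
      rw [Complex.sq_norm, Complex.sq_norm, Complex.normSq_apply, Complex.normSq_apply]
      simp only [Complex.sub_re, Complex.sub_im, Complex.add_re, Complex.add_im,
        Complex.one_re, Complex.one_im]
      nlinarith
    nlinarith [norm_nonneg (ζ-1), norm_nonneg (ζ+1)]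
  refine ⟨csqrt u, ?_, ?_⟩
  · have h1 : (‖(csqrt u)‖)^2 = ‖u‖ := by
      rw [← norm_pow, csqrt_sq]
    nlinarith [norm_nonneg (csqrt u)]
  · have hsq : (csqrt u)^2 = u := csqrt_sq u
    have h1u : 1 - u = 2/(ζ+1) := by
      rw [hu]
      field_simp
      norm_num
    have h1une : 1 - u ≠ 0 := by
      rw [h1u]
      exact div_ne_zero two_ne_zero hζ1
    rw [zeta, hsq]
    rw [div_eq_iff h1une, hu]
    field_simp
    ring

end LSaux

end

theorem stmt_17 (LS : ℂ → ℂ)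
    (hLS : ∀ z : ℂ, z ≠ 1 → z ≠ -1 →
        LS z = z / (1 - z ^ 2) * ((‖1 - z ^ 2‖ : ℝ) : ℂ) *
          ((Real.exp ((2 * z ^ 2 / (1 - z ^ 2)).re) : ℝ) : ℂ)) :
    Set.InjOn LS (ball (0 : ℂ) 1) ∧
      LS '' ball (0 : ℂ) 1 = {w : ℂ | w.re = 0 ∧ (Real.exp 1)⁻¹ ≤ |w.im|}ᶜ := by
  have habs : ∀ z : ℂ, z ∈ ball (0:ℂ) 1 → ‖z‖ < 1 := by
    intro z hz
    rwa [mem_ball_zero_iff] at hz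
  have hball : ∀ z : ℂ, ‖z‖ < 1 → z ∈ ball (0:ℂ) 1 := by
    intro z hz
    rwa [mem_ball_zero_iff]
  have hne1 : ∀ z : ℂ, ‖z‖ < 1 → z ≠ 1 := by
    intro z hz h0; rw [h0] at hz; simp at hz
  have hnem1 : ∀ z : ℂ, ‖z‖ < 1 → z ≠ -1 := by
    intro z hz h0; rw [h0] at hz; simp at hz
  have hform : ∀ z ∈ ball (0:ℂ) 1, LS z = z / (1 - z ^ 2) *
      ((‖(1 - z ^ 2)‖ : ℝ) : ℂ) *
      ((Real.exp ((2 * z ^ 2 / (1 - z ^ 2)).re) : ℝ) : ℂ) :=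
    fun z hz => hLS z (hne1 _ (habs _ hz)) (hnem1 _ (habs _ hz))
  have hLSsq : ∀ z ∈ ball (0:ℂ) 1, (LS z)^2 = LSaux.Qc (LSaux.zeta z) := by
    intro z hz
    rw [hform z hz]
    exact LSaux.LS_sq (habs z hz)
  have hodd : ∀ z ∈ ball (0:ℂ) 1, LS (-z) = - LS z := by
    intro z hz
    have h1 := hform z hz
    have h2 := hLS (-z) (by
        intro h0
        have := habs z hz
        rw [show z = -(1:ℂ) by linear_combination -h0] at this
        simp at this)
      (by
        intro h0
        have := habs z hz
        rw [show z = (1:ℂ) by linear_combination -h0] at this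
        simp at this)
    rw [show (-z)^2 = z^2 by ring] at h2
    rw [h2, h1]
    ring
  have hzero : ∀ z ∈ ball (0:ℂ) 1, LS z = 0 → z = 0 := by
    intro z hz h0
    rw [hform z hz] at h0
    have hne := LSaux.one_sub_sq_ne (habs z hz)
    have hA : ((‖(1 - z^2)‖ : ℝ):ℂ) ≠ 0 := by
      rw [Ne, Complex.ofReal_eq_zero]
      exact norm_ne_zero_iff.2 hne
    have hE : ((Real.exp ((2 * z ^ 2 / (1 - z ^ 2)).re) : ℝ):ℂ) ≠ 0 := by
      rw [Ne, Complex.ofReal_eq_zero]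
      exact (Real.exp_pos _).ne'
    rcases mul_eq_zero.1 h0 with h1 | h1
    · rcases mul_eq_zero.1 h1 with h2 | h2
      · rcases div_eq_zero_iff.1 h2 with h3 | h3
        · exact h3
        · exact absurd h3 hne
      · exact absurd h2 hA
    · exact absurd h1 hE
  have hexp2 : Real.exp (-2) = ((Real.exp 1)⁻¹)^2 := by
    rw [show (-2:ℝ) = (-1) + (-1) by norm_num, Real.exp_add, Real.exp_neg]
    ring
  constructor
  · -- injectivity
    intro z₁ hz₁ z₂ hz₂ heq
    have hsq : LSaux.Qc (LSaux.zeta z₁) = LSaux.Qc (LSaux.zeta z₂) := by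
      rw [← hLSsq z₁ hz₁, ← hLSsq z₂ hz₂, heq]
    have hζeq := LSaux.Qc_inj (LSaux.zeta_re_pos (habs _ hz₁))
      (LSaux.zeta_re_pos (habs _ hz₂)) hsq
    have hz2 : z₁^2 = z₂^2 := by
      rw [← LSaux.zeta_z_sq (habs _ hz₁), ← LSaux.zeta_z_sq (habs _ hz₂), hζeq]
    have hfac : (z₁ - z₂)*(z₁ + z₂) = 0 := by linear_combination hz2
    rcases mul_eq_zero.1 hfac with h0 | h0
    · linear_combination h0
    · have hz₂eq : z₂ = -z₁ := by linear_combination h0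
      rw [hz₂eq, hodd z₁ hz₁] at heq
      have h00 : LS z₁ = 0 := by
        have h2 : (2:ℂ) * LS z₁ = 0 := by linear_combination heq
        simpa using h2
      have hz10 : z₁ = 0 := hzero z₁ hz₁ h00
      rw [hz₂eq, hz10]
      simp
  · -- image
    ext w
    simp only [mem_image, mem_compl_iff, mem_setOf_eq]
    constructor
    · rintro ⟨z, hz, rfl⟩
      rintro ⟨hre, him⟩
      have hQ := hLSsq z hz
      have hζre := LSaux.zeta_re_pos (habs z hz)
      apply LSaux.Qc_ne_slit hζre
      rw [← hQ]
      constructor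
      · rw [pow_two, Complex.mul_im, hre]
        ring
      · rw [pow_two, Complex.mul_re, hre, hexp2]
        have h1 : ((Real.exp 1)⁻¹)^2 ≤ (LS z).im ^ 2 := by
          have h2 : ((Real.exp 1)⁻¹) ≤ |(LS z).im| := him
          have h3 : (0:ℝ) ≤ (Real.exp 1)⁻¹ := by positivity
          nlinarith [_root_.sq_abs ((LS z).im)]
        nlinarith
    · intro hn
      have hv : ¬((w^2).im = 0 ∧ (w^2).re ≤ -Real.exp (-2)) := by
        rintro ⟨h1, h2⟩
        rw [pow_two, Complex.mul_im] at h1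
        rw [pow_two, Complex.mul_re, hexp2] at h2
        have h1' : 2 * (w.re * w.im) = 0 := by linarith
        rcases mul_eq_zero.1 h1' with h0 | h0
        · norm_num at h0
        · rcases mul_eq_zero.1 h0 with hr0 | hi0
          · -- w.re = 0, so im² ≥ (e⁻¹)², hence |im| ≥ e⁻¹, contradicting hn
            apply hn
            refine ⟨hr0, ?_⟩
            rw [hr0] at h2
            have h4 : ((Real.exp 1)⁻¹)^2 ≤ w.im^2 := by nlinarith
            have h5 : (0:ℝ) ≤ (Real.exp 1)⁻¹ := by positivity
            nlinarith [_root_.sq_abs w.im, abs_nonneg w.im]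
          · rw [hi0] at h2
            have h5 : (0:ℝ) < (Real.exp 1)⁻¹ := by positivity
            nlinarith
      obtain ⟨ζ, hζre, hζval⟩ := LSaux.Qc_surj hv
      obtain ⟨z, hzabs, hzeta⟩ := LSaux.zeta_surj hζre
      have hzball : z ∈ ball (0:ℂ) 1 := hball z hzabs
      have hsq : (LS z)^2 = w^2 := by rw [hLSsq z hzball, hzeta, hζval]
      have hfac : (LS z - w)*(LS z + w) = 0 := by linear_combination hsq
      rcases mul_eq_zero.1 hfac with h0 | h0
      · exact ⟨z, hzball, by linear_combination h0⟩
      · refine ⟨-z, ?_, ?_⟩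
        · apply hball
          rwa [norm_neg]
        · rw [hodd z hzball]
          linear_combination -h0
end
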